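/- Suppose m : ℝ → ℂ is N-times differentiable and satisfies |m^{(j)}(τ)| ≤ C (τ² + c)^{−j/2} for all 0 ≤ j ≤ N and all τ ∈ ℝ, where c ≥ 1. Then there is a constant C' (depending on C, N) such that for all t > 0 and all τ ∈ ℝ, the N-th derivative in τ of the function τ ↦ (τ² + c)^N e^{−t(τ²+c)} m(τ) is bounded in absolute value by C' · t^{−N/2} · e^{−(t/2)(τ²+c)}. -/

import Mathlib

namespace MKE

structure Term where
  k : ℝ
  a : ℕ
  b : ℕ
  e : ℕ
  j : ℕ

noncomputable def Term.eval (c : ℝ) (m : ℝ → ℂ) (T : Term) (t s : ℝ) : ℂ :=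
  ((T.k * t ^ T.a * (s ^ T.b * (s ^ 2 + c) ^ T.e * Real.exp (-t * (s ^ 2 + c))) : ℝ) : ℂ) *
    iteratedDeriv T.j m s

def Term.dstep (T : Term) : List Term :=
  [⟨T.k * T.b, T.a, T.b - 1, T.e, T.j⟩,
   ⟨T.k * (2 * T.e), T.a, T.b + 1, T.e - 1, T.j⟩,
   ⟨T.k * (-2), T.a + 1, T.b + 1, T.e, T.j⟩,
   ⟨T.k, T.a, T.b, T.e, T.j + 1⟩]

noncomputable def evalL (c : ℝ) (m : ℝ → ℂ) (L : List Term) (t s : ℝ) : ℂ :=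
  (L.map fun T => T.eval c m t s).sum

def step (L : List Term) : List Term := L.flatMap Term.dstep

theorem Term.hasDerivAt {N : ℕ} (c : ℝ) (m : ℝ → ℂ) (hm : ContDiff ℝ N m) (T : Term)
    (hj : T.j < N) (t s : ℝ) :
    HasDerivAt (fun s => T.eval c m t s) (evalL c m T.dstep t s) s := by
  have hmd : HasDerivAt (iteratedDeriv T.j m) (iteratedDeriv (T.j + 1) m s) s := by
    have h1 : DifferentiableAt ℝ (iteratedDeriv T.j m) s :=
      (hm.differentiable_iteratedDeriv T.j (by exact_mod_cast hj)).differentiableAt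
    simpa [← iteratedDeriv_succ] using h1.hasDerivAt
  have hs : HasDerivAt (fun s : ℝ => s ^ T.b) ((T.b : ℝ) * s ^ (T.b - 1)) s :=
    hasDerivAt_pow T.b s
  have hq : HasDerivAt (fun s : ℝ => s ^ 2 + c) (2 * s) s := by
    simpa using (hasDerivAt_pow 2 s).add_const c
  have hp : HasDerivAt (fun s : ℝ => (s ^ 2 + c) ^ T.e)
      ((T.e : ℝ) * (s ^ 2 + c) ^ (T.e - 1) * (2 * s)) s := hq.pow T.e
  have hexp : HasDerivAt (fun s : ℝ => Real.exp (-t * (s ^ 2 + c)))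
      (Real.exp (-t * (s ^ 2 + c)) * (-t * (2 * s))) s := (hq.const_mul (-t)).exp
  have hu := ((hs.mul hp).mul hexp).const_mul (T.k * t ^ T.a)
  have := hu.ofReal_comp.mul hmd
  convert this using 1
  · rfl
  · rfl
  simp only [evalL, Term.dstep, Term.eval, List.map_cons, List.map_nil, List.sum_cons,
    List.sum_nil, add_zero, Pi.mul_apply]
  push_cast
  ring

theorem hasDerivAt_evalL {N : ℕ} (c : ℝ) (m : ℝ → ℂ) (hm : ContDiff ℝ N m) (L : List Term)
    (hL : ∀ T ∈ L, T.j < N) (t s : ℝ) :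
    HasDerivAt (fun s => evalL c m L t s) (evalL c m (step L) t s) s := by
  induction L with
  | nil =>
      have : (fun s : ℝ => evalL c m [] t s) = fun _ => (0 : ℂ) := by
        funext x; simp [evalL]
      rw [this]
      simpa [evalL, step] using hasDerivAt_const s (0 : ℂ)
  | cons T L ih =>
      have h1 := Term.hasDerivAt c m hm T (hL T (by simp)) t s
      have h2 := ih (fun T' hT' => hL T' (by simp [hT']))
      have e1 : (fun s : ℝ => evalL c m (T :: L) t s)
          = fun s => T.eval c m t s + evalL c m L t s := by
        funext x; simp [evalL]
      have e2 : evalL c m (step (T :: L)) t s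
          = evalL c m T.dstep t s + evalL c m (step L) t s := by
        simp [evalL, step]
      rw [e1, e2]
      exact h1.add h2

theorem mem_dstep_j {T T' : Term} (h : T' ∈ T.dstep) : T'.j = T.j ∨ T'.j = T.j + 1 := by
  simp only [Term.dstep, List.mem_cons, List.mem_singleton, List.not_mem_nil, or_false] at h
  rcases h with h | h | h | h <;> subst h <;> simp

theorem iter_eq {N : ℕ} (c : ℝ) (m : ℝ → ℂ) (hm : ContDiff ℝ N m) (t : ℝ) :
    ∀ n, ∀ L : List Term, (∀ T ∈ L, T.j + n ≤ N) →
      iteratedDeriv n (fun s => evalL c m L t s) = fun τ => evalL c m (step^[n] L) t τ := by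
  intro n
  induction n with
  | zero => intro L _; simp [iteratedDeriv_zero]
  | succ n ih =>
      intro L hL
      rw [iteratedDeriv_succ']
      have hderiv : (deriv fun s => evalL c m L t s) = fun s => evalL c m (step L) t s := by
        funext x
        exact (hasDerivAt_evalL c m hm L
          (fun T hT => by have := hL T hT; omega) t x).deriv
      have hL' : ∀ T ∈ step L, T.j + n ≤ N := by
        intro T hT
        rw [step, List.mem_flatMap] at hT
        obtain ⟨T₀, hT₀, hmem⟩ := hT
        have := hL T₀ hT₀
        rcases mem_dstep_j hmem with h | h <;> omega
      rw [hderiv, ih (step L) hL', Function.iterate_succ_apply]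

def Inv (N n : ℕ) (T : Term) : Prop :=
  T.k = 0 ∨ (T.b + 2 * T.e = 2 * T.a + T.j + (2 * N - n) ∧ T.j ≤ n)

theorem inv_step {N n : ℕ} (hn : n < N) {T T' : Term} (h : Inv N n T) (h' : T' ∈ T.dstep) :
    Inv N (n + 1) T' := by
  simp only [Term.dstep, List.mem_cons, List.mem_singleton, List.not_mem_nil, or_false] at h'
  rcases h with hk | ⟨heq, hj⟩
  · rcases h' with h' | h' | h' | h' <;> subst h' <;> exact Or.inl (by simp [hk])
  rcases h' with h' | h' | h' | h'
  · subst h'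
    rcases Nat.eq_zero_or_pos T.b with hb | hb
    · exact Or.inl (by simp [hb])
    · refine Or.inr ⟨?_, ?_⟩ <;> dsimp only <;> omega
  · subst h'
    rcases Nat.eq_zero_or_pos T.e with he | he
    · exact Or.inl (by simp [he])
    · refine Or.inr ⟨?_, ?_⟩ <;> dsimp only <;> omega
  · subst h'; refine Or.inr ⟨?_, ?_⟩ <;> dsimp only <;> omega
  · subst h'; refine Or.inr ⟨?_, ?_⟩ <;> dsimp only <;> omega

def initT (N : ℕ) : Term := ⟨1, 0, 0, N, 0⟩

theorem inv_iterate {N : ℕ} : ∀ n ≤ N, ∀ T ∈ step^[n] [initT N], Inv N n T := by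
  intro n
  induction n with
  | zero =>
      intro _ T hT
      simp only [Function.iterate_zero, id_eq, List.mem_singleton] at hT
      subst hT
      exact Or.inr ⟨by simp [initT], by simp [initT]⟩
  | succ n ih =>
      intro hn T hT
      rw [Function.iterate_succ_apply', step, List.mem_flatMap] at hT
      obtain ⟨T₀, hT₀, hmem⟩ := hT
      exact inv_step (by omega) (ih (by omega) T₀ hT₀) hmem

theorem rpow_half_neg {x : ℝ} (hx : 0 < x) (n : ℕ) :
    x ^ (-(n : ℝ) / 2) = (Real.sqrt x ^ n)⁻¹ := by
  rw [neg_div, Real.rpow_neg hx.le, Real.sqrt_eq_rpow, ← Real.rpow_natCast (x ^ ((1:ℝ)/2)) n,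
    ← Real.rpow_mul hx.le]
  congr 1
  ring_nf

theorem list_norm_sum_le (l : List ℂ) : ‖l.sum‖ ≤ (l.map fun z => ‖z‖).sum := by
  induction l with
  | nil => simp
  | cons z l ih =>
      simp only [List.sum_cons, List.map_cons]
      exact (norm_add_le _ _).trans (by linarith)

theorem term_bound {N : ℕ} {c C : ℝ} {m : ℝ → ℂ} (hc : 1 ≤ c) (hC : 0 ≤ C)
    (hbound : ∀ j ≤ N, ∀ τ : ℝ, ‖iteratedDeriv j m τ‖ ≤ C * (τ ^ 2 + c) ^ (-(j : ℝ) / 2))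
    (T : Term) (hInv : Inv N N T) {t : ℝ} (ht : 0 < t) (τ : ℝ) :
    ‖T.eval c m t τ‖ ≤ (|T.k| * C * Nat.factorial (2 * T.a + N) * Real.exp 1) *
      (t ^ (-(N : ℝ) / 2) * Real.exp (-(t / 2) * (τ ^ 2 + c))) := by
  have hX1 : (1 : ℝ) ≤ τ ^ 2 + c := by nlinarith [sq_nonneg τ]
  have hX0 : (0 : ℝ) < τ ^ 2 + c := by linarith
  rcases hInv with hk | ⟨heq, hj⟩
  · have : T.eval c m t τ = 0 := by simp [Term.eval, hk]
    rw [this, norm_zero, hk]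
    positivity
  -- abbreviations
  set X : ℝ := τ ^ 2 + c with hXdef
  set S : ℝ := Real.sqrt X with hSdef
  set st : ℝ := Real.sqrt t with hstdef
  have hS0 : 0 < S := Real.sqrt_pos.mpr hX0
  have hst0 : 0 < st := Real.sqrt_pos.mpr ht
  have hS2 : S ^ 2 = X := Real.sq_sqrt hX0.le
  have hst2 : st ^ 2 = t := Real.sq_sqrt ht.le
  have habs : |τ| ≤ S := by
    rw [hSdef, ← Real.sqrt_sq_eq_abs]
    exact Real.sqrt_le_sqrt (by nlinarith)
  -- norm splits
  have h1 : ‖T.eval c m t τ‖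
      = |T.k| * t ^ T.a * (|τ| ^ T.b * X ^ T.e * Real.exp (-t * X)) *
        ‖iteratedDeriv T.j m τ‖ := by
    rw [Term.eval, norm_mul, Complex.norm_real]
    congr 1
    rw [Real.norm_eq_abs, abs_mul, abs_mul, abs_mul, abs_mul, abs_pow, abs_pow, abs_pow,
      abs_of_pos ht, abs_of_pos hX0, abs_of_pos (Real.exp_pos _)]
  have hmb : ‖iteratedDeriv T.j m τ‖ ≤ C * (S ^ T.j)⁻¹ := by
    have := hbound T.j hj τ
    rwa [rpow_half_neg hX0 T.j] at this
  have hfac : |τ| ^ T.b * X ^ T.e ≤ S ^ (T.b + 2 * T.e) := by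
    rw [pow_add, pow_mul, hS2]
    have : |τ| ^ T.b ≤ S ^ T.b := pow_le_pow_left₀ (abs_nonneg τ) habs T.b
    exact mul_le_mul_of_nonneg_right this (by positivity)
  have hE0 : (0 : ℝ) < Real.exp (-t * X) := Real.exp_pos _
  have h2 : ‖T.eval c m t τ‖
      ≤ |T.k| * C * (t ^ T.a * S ^ (2 * T.a + N) * Real.exp (-t * X)) := by
    rw [h1]
    have step1 : |T.k| * t ^ T.a * (|τ| ^ T.b * X ^ T.e * Real.exp (-t * X)) *
        ‖iteratedDeriv T.j m τ‖
        ≤ |T.k| * t ^ T.a * (S ^ (T.b + 2 * T.e) * Real.exp (-t * X)) * (C * (S ^ T.j)⁻¹) := by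
      apply mul_le_mul
      · apply mul_le_mul_of_nonneg_left _ (by positivity)
        exact mul_le_mul_of_nonneg_right hfac hE0.le
      · exact hmb
      · exact norm_nonneg _
      · positivity
    refine step1.trans (le_of_eq ?_)
    have hSpow : S ^ (T.b + 2 * T.e) = S ^ T.j * S ^ (2 * T.a + N) := by
      rw [← pow_add]; congr 1; omega
    rw [hSpow]
    field_simp
  -- now the key exponential estimate
  have hta : t ^ T.a = st ^ (2 * T.a) := by rw [pow_mul, hst2]
  have hkey : t ^ T.a * S ^ (2 * T.a + N) * Real.exp (-t * X)
      ≤ Nat.factorial (2 * T.a + N) * Real.exp 1 * ((st ^ N)⁻¹ * Real.exp (-(t / 2) * X)) := by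
    have hsq : st * S = Real.sqrt (t * X) := (Real.sqrt_mul ht.le X).symm
    have hy0 : 0 < t * X := by positivity
    set y : ℝ := t * X with hydef
    have hsy : Real.sqrt y ^ 2 = y := Real.sq_sqrt hy0.le
    have hsy0 : 0 ≤ Real.sqrt y := Real.sqrt_nonneg y
    have e1 : t ^ T.a * S ^ (2 * T.a + N)
        = (st ^ N)⁻¹ * Real.sqrt y ^ (2 * T.a + N) := by
      rw [hta, ← hsq, mul_pow]
      have : st ^ (2 * T.a) = (st ^ N)⁻¹ * st ^ (2 * T.a + N) := by
        rw [pow_add]; field_simp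
      rw [this]; ring
    rw [e1]
    have hb1 : Real.sqrt y ^ (2 * T.a + N) ≤ Nat.factorial (2 * T.a + N) * Real.exp (Real.sqrt y) := by
      have := Real.pow_div_factorial_le_exp (x := Real.sqrt y) hsy0 (2 * T.a + N)
      have hfpos : (0 : ℝ) < Nat.factorial (2 * T.a + N) := by positivity
      calc Real.sqrt y ^ (2 * T.a + N)
          = Real.sqrt y ^ (2 * T.a + N) / Nat.factorial (2 * T.a + N) * Nat.factorial (2 * T.a + N) := by field_simp
        _ ≤ Real.exp (Real.sqrt y) * Nat.factorial (2 * T.a + N) := by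
            exact mul_le_mul_of_nonneg_right this hfpos.le
        _ = Nat.factorial (2 * T.a + N) * Real.exp (Real.sqrt y) := by ring
    have hb2 : Real.sqrt y ≤ y / 2 + 1 := by
      nlinarith [sq_nonneg (Real.sqrt y - 1)]
    have hb3 : Real.exp (Real.sqrt y) ≤ Real.exp 1 * Real.exp (y / 2) := by
      rw [← Real.exp_add]
      exact Real.exp_le_exp.mpr (by linarith)
    have hEy : Real.exp (-t * X) = Real.exp (-y) := by rw [hydef]; ring_nf
    have hEy2 : Real.exp (-(t / 2) * X) = Real.exp (-(y / 2)) := by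
      rw [hydef]; ring_nf
    rw [hEy, hEy2]
    have hfin : Real.sqrt y ^ (2 * T.a + N) * Real.exp (-y)
        ≤ Nat.factorial (2 * T.a + N) * Real.exp 1 * Real.exp (-(y / 2)) := by
      calc Real.sqrt y ^ (2 * T.a + N) * Real.exp (-y)
          ≤ Nat.factorial (2 * T.a + N) * Real.exp (Real.sqrt y) * Real.exp (-y) := by
            exact mul_le_mul_of_nonneg_right hb1 (Real.exp_pos _).le
        _ ≤ Nat.factorial (2 * T.a + N) * (Real.exp 1 * Real.exp (y / 2)) * Real.exp (-y) := by
            have hfpos : (0 : ℝ) ≤ (Nat.factorial (2 * T.a + N) : ℝ) := by positivity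
            exact mul_le_mul_of_nonneg_right
              (mul_le_mul_of_nonneg_left hb3 hfpos) (Real.exp_pos _).le
        _ = Nat.factorial (2 * T.a + N) * Real.exp 1 * (Real.exp (y / 2) * Real.exp (-y)) := by ring
        _ = Nat.factorial (2 * T.a + N) * Real.exp 1 * Real.exp (-(y / 2)) := by
            rw [← Real.exp_add]; ring_nf
    calc (st ^ N)⁻¹ * Real.sqrt y ^ (2 * T.a + N) * Real.exp (-y)
        = (st ^ N)⁻¹ * (Real.sqrt y ^ (2 * T.a + N) * Real.exp (-y)) := by ring
      _ ≤ (st ^ N)⁻¹ * (Nat.factorial (2 * T.a + N) * Real.exp 1 * Real.exp (-(y / 2))) := by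
          exact mul_le_mul_of_nonneg_left hfin (by positivity)
      _ = Nat.factorial (2 * T.a + N) * Real.exp 1 * ((st ^ N)⁻¹ * Real.exp (-(y / 2))) := by ring
  have hrt : t ^ (-(N : ℝ) / 2) = (st ^ N)⁻¹ := rpow_half_neg ht N
  calc ‖T.eval c m t τ‖
      ≤ |T.k| * C * (t ^ T.a * S ^ (2 * T.a + N) * Real.exp (-t * X)) := h2
    _ ≤ |T.k| * C * (Nat.factorial (2 * T.a + N) * Real.exp 1 * ((st ^ N)⁻¹ * Real.exp (-(t / 2) * X))) := by
        exact mul_le_mul_of_nonneg_left hkey (by positivity)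
    _ = (|T.k| * C * Nat.factorial (2 * T.a + N) * Real.exp 1) * ((st ^ N)⁻¹ * Real.exp (-(t / 2) * X)) := by
        ring
    _ = (|T.k| * C * Nat.factorial (2 * T.a + N) * Real.exp 1) *
        (t ^ (-(N : ℝ) / 2) * Real.exp (-(t / 2) * X)) := by rw [hrt]

end MKE

theorem multiplier_key_estimate (N : ℕ) (c : ℝ) (hc : 1 ≤ c) (C : ℝ) (m : ℝ → ℂ)
    (hm : ContDiff ℝ N m)
    (hbound : ∀ j ≤ N, ∀ τ : ℝ, ‖iteratedDeriv j m τ‖ ≤ C * (τ ^ 2 + c) ^ (-(j : ℝ) / 2)) :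
    ∃ C' > 0, ∀ t : ℝ, 0 < t → ∀ τ : ℝ,
      ‖iteratedDeriv N
          (fun s : ℝ => (((s ^ 2 + c) ^ N * Real.exp (-t * (s ^ 2 + c)) : ℝ) : ℂ) * m s) τ‖ ≤
        C' * t ^ (-(N : ℝ) / 2) * Real.exp (-(t / 2) * (τ ^ 2 + c)) := by
  classical
  have hC : 0 ≤ C := by
    have h := hbound 0 (Nat.zero_le N) 0
    have : (0:ℝ)^2 + c > 0 := by nlinarith
    simp only [Nat.cast_zero, neg_zero, zero_div, Real.rpow_zero, mul_one] at h
    exact le_trans (norm_nonneg _) h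
  set L : List MKE.Term := MKE.step^[N] [MKE.initT N] with hLdef
  set C' : ℝ := (L.map fun T => |T.k| * C * Nat.factorial (2 * T.a + N) * Real.exp 1).sum + 1 with hC'def
  have hsumnn : 0 ≤ (L.map fun T => |T.k| * C * Nat.factorial (2 * T.a + N) * Real.exp 1).sum := by
    apply List.sum_nonneg
    intro x hx
    simp only [List.mem_map] at hx
    obtain ⟨T, _, rfl⟩ := hx
    positivity
  refine ⟨C', by linarith, ?_⟩
  intro t ht τ
  have hfun : (fun s : ℝ => (((s ^ 2 + c) ^ N * Real.exp (-t * (s ^ 2 + c)) : ℝ) : ℂ) * m s)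
      = fun s => MKE.evalL c m [MKE.initT N] t s := by
    funext s
    simp [MKE.evalL, MKE.Term.eval, MKE.initT]
  rw [hfun, MKE.iter_eq c m hm t N [MKE.initT N]
    (by intro T hT; simp only [List.mem_singleton] at hT; subst hT; simp [MKE.initT])]
  have hinv : ∀ T ∈ L, MKE.Inv N N T := MKE.inv_iterate N le_rfl
  have hbd : ∀ T ∈ L, ‖T.eval c m t τ‖ ≤ (|T.k| * C * Nat.factorial (2 * T.a + N) * Real.exp 1) *
      (t ^ (-(N : ℝ) / 2) * Real.exp (-(t / 2) * (τ ^ 2 + c))) :=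
    fun T hT => MKE.term_bound hc hC hbound T (hinv T hT) ht τ
  have hpos2 : 0 ≤ t ^ (-(N : ℝ) / 2) * Real.exp (-(t / 2) * (τ ^ 2 + c)) := by positivity
  calc ‖MKE.evalL c m L t τ‖
      ≤ ((L.map fun T => T.eval c m t τ).map fun z => ‖z‖).sum :=
        MKE.list_norm_sum_le _
    _ = (L.map fun T => ‖T.eval c m t τ‖).sum := by rw [List.map_map]; rfl
    _ ≤ (L.map fun T => (|T.k| * C * Nat.factorial (2 * T.a + N) * Real.exp 1) *
          (t ^ (-(N : ℝ) / 2) * Real.exp (-(t / 2) * (τ ^ 2 + c)))).sum :=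
        List.sum_le_sum hbd
    _ = (L.map fun T => |T.k| * C * Nat.factorial (2 * T.a + N) * Real.exp 1).sum *
          (t ^ (-(N : ℝ) / 2) * Real.exp (-(t / 2) * (τ ^ 2 + c))) := by
        rw [← List.sum_map_mul_right]
    _ ≤ C' * (t ^ (-(N : ℝ) / 2) * Real.exp (-(t / 2) * (τ ^ 2 + c))) := by
        apply mul_le_mul_of_nonneg_right _ hpos2
        rw [hC'def]; linarith
    _ = C' * t ^ (-(N : ℝ) / 2) * Real.exp (-(t / 2) * (τ ^ 2 + c)) := by ring
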